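/- In the Cayley–Dickson model of the octonions, the norm-square is multiplicative: N (z₁ * z₂) = N z₁ * N z₂ for all z₁, z₂ ∈ 𝕆 (equivalently, |z₁ z₂| = |z₁| |z₂| for the octonion norm |z| = √(N z)). -/

import Mathlib

noncomputable section

/-- Cayley–Dickson model of the octonions over the quaternions. -/
def Octo : Type := Quaternion ℝ × Quaternion ℝ

/-- Cayley–Dickson multiplication: (a,b) * (c,d) = (a*c − (star d)*b, d*a + b*(star c)). -/
instance : Mul Octo :=
  ⟨fun z w => ((z.1 * w.1 - star w.2 * z.2, w.2 * z.1 + z.2 * star w.1) :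
      Quaternion ℝ × Quaternion ℝ)⟩

instance : Add Octo := ⟨fun z w => ((z.1 + w.1, z.2 + w.2) : Quaternion ℝ × Quaternion ℝ)⟩
instance : Sub Octo := ⟨fun z w => ((z.1 - w.1, z.2 - w.2) : Quaternion ℝ × Quaternion ℝ)⟩
instance : Neg Octo := ⟨fun z => ((-z.1, -z.2) : Quaternion ℝ × Quaternion ℝ)⟩
instance : SMul ℝ Octo := ⟨fun r z => ((r • z.1, r • z.2) : Quaternion ℝ × Quaternion ℝ)⟩

/-- Octonion conjugation. -/
def oconj (z : Octo) : Octo := (star z.1, -z.2)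

/-- Embedding of the quaternions. -/
def ι (γ : Quaternion ℝ) : Octo := (γ, 0)

/-- The distinguished element e₄ = (0,1). -/
def e₄ : Octo := ((0 : Quaternion ℝ), (1 : Quaternion ℝ))

/-- Norm-square of an octonion. -/
def N (z : Octo) : ℝ := Quaternion.normSq z.1 + Quaternion.normSq z.2

/-- In the Cayley–Dickson model of the octonions, the norm-square is multiplicative:
    N (z₁ * z₂) = N z₁ * N z₂ (equivalently |z₁ z₂| = |z₁| |z₂| for |z| = √(N z)). -/
theorem normSq_mul (z₁ z₂ : Octo) : N (z₁ * z₂) = N z₁ * N z₂ := by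
  obtain ⟨a, b⟩ := z₁
  obtain ⟨c, d⟩ := z₂
  show Quaternion.normSq (a * c - star d * b) + Quaternion.normSq (d * a + b * star c) =
    (Quaternion.normSq a + Quaternion.normSq b) * (Quaternion.normSq c + Quaternion.normSq d)
  simp only [Quaternion.normSq_def', Quaternion.re_mul, Quaternion.imI_mul,
    Quaternion.imJ_mul, Quaternion.imK_mul, Quaternion.re_sub, Quaternion.imI_sub,
    Quaternion.imJ_sub, Quaternion.imK_sub, Quaternion.re_add, Quaternion.imI_add,
    Quaternion.imJ_add, Quaternion.imK_add, Quaternion.re_star, Quaternion.imI_star,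
    Quaternion.imJ_star, Quaternion.imK_star]
  ring
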